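/- Let ℐ be an ideal of Φ⁺ and let w ∈ W_a satisfy supp(w) = ℐ (i.e., the support of w, the set of α ∈ Φ with α + mδ ∈ N(w) for some m, equals ℐ). Then k(α, w) ≥ α_{ℐ,+} for all α ∈ Φ⁺, where α_{ℐ,+} is the maximal number of summands in a decomposition of α as a sum of elements of ℐ. -/

import Mathlib

open RealInnerProductSpace
open scoped Classical

variable {V : Type*} [NormedAddCommGroup V] [InnerProductSpace ℝ V] [FiniteDimensional ℝ V]

/-- A finite crystallographic root system in the real inner product space `V`. -/
structure IsRootSystem (Φ : Set V) : Prop where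
  finite : Φ.Finite
  nonzero : (0 : V) ∉ Φ
  spanning : Submodule.span ℝ Φ = ⊤
  reflect_mem : ∀ α ∈ Φ, ∀ β ∈ Φ, β - (2 * ⟪β, α⟫ / ⟪α, α⟫) • α ∈ Φ
  crystallographic : ∀ α ∈ Φ, ∀ β ∈ Φ, ∃ n : ℤ, 2 * ⟪β, α⟫ / ⟪α, α⟫ = (n : ℝ)

/-- `Pos` is a system of positive roots for `Φ`: the roots on the positive side of a
generic linear functional. -/
def IsPositiveSystem (Φ Pos : Set V) : Prop :=
  ∃ f : V →ₗ[ℝ] ℝ, (∀ α ∈ Φ, f α ≠ 0) ∧ Pos = {α ∈ Φ | 0 < f α}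

/-- Irreducibility of a root system: no splitting into two nonempty orthogonal parts. -/
def IsIrreducibleRootSystem (Φ : Set V) : Prop :=
  Φ.Nonempty ∧ ∀ Φ₁ Φ₂ : Set V, Φ = Φ₁ ∪ Φ₂ →
    (∀ α ∈ Φ₁, ∀ β ∈ Φ₂, ⟪α, β⟫ = 0) → Φ₁ = ∅ ∨ Φ₂ = ∅

/-- A simple root: a positive root that is not the sum of two positive roots. -/
def IsSimpleRoot (Pos : Set V) (α : V) : Prop :=
  α ∈ Pos ∧ ∀ β ∈ Pos, ∀ γ ∈ Pos, α ≠ β + γ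

/-- An upper order ideal of the positive roots. -/
def IsUpperIdeal (Pos I : Set V) : Prop :=
  I ⊆ Pos ∧ ∀ α ∈ I, ∀ β ∈ Pos, α + β ∈ Pos → α + β ∈ I

/-- `γ` is a sum of `k` elements of `S`. -/
def IsSumOf (S : Set V) (k : ℕ) (γ : V) : Prop :=
  ∃ f : Fin k → V, (∀ i, f i ∈ S) ∧ ∑ i, f i = γ

/-- The standard partial order on roots: `α ≼ γ` iff `γ - α` is a (possibly empty)
sum of positive roots. -/
def RootLE (Pos : Set V) (α γ : V) : Prop := ∃ k, IsSumOf Pos k (γ - α)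

/-- The set of minimal roots of an ideal `I`. -/
def minimalRoots (Pos I : Set V) : Set V :=
  {α | α ∈ I ∧ ∀ β ∈ I, RootLE Pos β α → β = α}

/-- `γ_{I,+}`: the maximal number of summands in a decomposition of `γ` as a sum of
elements of `I` (with junk value `0` if no decomposition exists). -/
noncomputable def aPlus (I : Set V) (γ : V) : ℕ := sSup {k | IsSumOf I k γ}

/-- `γ_{I,-}`: the minimal `k` such that `γ` is a sum of `k + 1` elements of
`Pos \ I`. -/
noncomputable def aMinus (Pos I : Set V) (γ : V) : ℕ := sInf {k | IsSumOf (Pos \ I) (k + 1) γ}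

/-- The height of a positive root: the number of summands when written as a sum of
simple roots. -/
noncomputable def rootHeight (Pos : Set V) (γ : V) : ℕ :=
  sSup {k | IsSumOf {α | IsSimpleRoot Pos α} k γ}

/-- The reflection in the hyperplane orthogonal to `α`. -/
noncomputable def rootReflection (α : V) : V ≃ₗᵢ[ℝ] V :=
  Submodule.reflection ((ℝ ∙ α)ᗮ)

/-- The Weyl group: the subgroup of linear isometries generated by root reflections. -/
noncomputable def WeylGroup (Φ : Set V) : Subgroup (V ≃ₗᵢ[ℝ] V) :=
  Subgroup.closure {g | ∃ α ∈ Φ, g = rootReflection α}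

/-- The coroot `α∨ = 2α/⟨α,α⟩` of a root `α`. -/
noncomputable def coroot (α : V) : V := (2 / ⟪α, α⟫) • α

/-- The coroot lattice `Q∨`. -/
noncomputable def corootLattice (Φ : Set V) : AddSubgroup V :=
  AddSubgroup.closure {v | ∃ α ∈ Φ, v = coroot α}

/-- A root reflection viewed as an affine transformation. -/
noncomputable def rootReflectionAff (α : V) : V ≃ᵃ[ℝ] V :=
  (rootReflection α).toLinearEquiv.toAffineEquiv

/-- The affine Weyl group `W_a ≅ W ⋉ Q∨`: generated by the root reflections together
with the translations by elements of the coroot lattice. -/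
noncomputable def affineWeylGroup (Φ : Set V) : Subgroup (V ≃ᵃ[ℝ] V) :=
  Subgroup.closure
    ({g | ∃ α ∈ Φ, g = rootReflectionAff α} ∪
     {g | ∃ lam ∈ corootLattice Φ, g = AffineEquiv.constVAdd ℝ V lam})

/-- The fundamental alcove `A` (with respect to the highest root `θ`). -/
def fundamentalAlcove (Pos : Set V) (θ : V) : Set V :=
  {v | (∀ α, IsSimpleRoot Pos α → 0 < ⟪α, v⟫) ∧ ⟪θ, v⟫ < 1}

/-- `kk α = k(α, w)` for every positive root `α`: the alcove `w(A)` lies strictly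
between the hyperplanes `H_{α, kk α}` and `H_{α, kk α + 1}`. -/
def IsAlcoveK (Pos : Set V) (θ : V) (w : V ≃ᵃ[ℝ] V) (kk : V → ℤ) : Prop :=
  ∀ α ∈ Pos, ∀ v ∈ fundamentalAlcove Pos θ,
    (kk α : ℝ) < ⟪α, w v⟫ ∧ ⟪α, w v⟫ < kk α + 1

/-- `supp w = I` for an ideal `I ⊆ Φ⁺`: `w` is dominant (no negative root occurs in
the support, i.e. `k(α, w) ≥ 0` for all positive `α`) and a positive root `α` lies in
the support (i.e. `k(α, w) ≥ 1`) exactly when `α ∈ I`. -/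
def SuppIs (Pos : Set V) (θ : V) (w : V ≃ᵃ[ℝ] V) (I : Set V) : Prop :=
  ∃ kk : V → ℤ, IsAlcoveK Pos θ w kk ∧ ∀ α ∈ Pos, 0 ≤ kk α ∧ (α ∈ I ↔ 1 ≤ kk α)

/-- The sign type `ST(I)`: the set of elements of the affine Weyl group whose support
is `I`. -/
noncomputable def signType (Φ Pos : Set V) (θ : V) (I : Set V) : Set (V ≃ᵃ[ℝ] V) :=
  {w | w ∈ affineWeylGroup Φ ∧ SuppIs Pos θ w I}

/-- The length of `w ∈ W_a`, computed as `∑_{α ∈ Φ⁺} |k(α, w)|`. -/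
noncomputable def affLen (Pos : Set V) (θ : V) (w : V ≃ᵃ[ℝ] V) : ℕ :=
  if h : ∃ kk : V → ℤ, IsAlcoveK Pos θ w kk then
    ∑ᶠ α ∈ Pos, (h.choose α).natAbs
  else 0

/-- The simple affine reflections `S = {s₀, s₁, …, s_n}` of `W_a`: the reflections in
the simple roots together with the affine reflection `s₀ = s_θ τ_{-θ∨}` in `H_{θ,1}`. -/
noncomputable def simpleAffineReflections (Pos : Set V) (θ : V) : Set (V ≃ᵃ[ℝ] V) :=
  {s | (∃ α, IsSimpleRoot Pos α ∧ s = rootReflectionAff α) ∨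
    s = (rootReflectionAff θ).trans (AffineEquiv.constVAdd ℝ V (coroot θ))}

/-- The translation part `λ` of `w = x τ_λ` (so that `w v = x (v + λ)`). -/
noncomputable def translationPart (w : V ≃ᵃ[ℝ] V) : V := w.linear.symm (w 0)

/-- If `I` is an ideal of `Φ⁺` and `w ∈ W_a` has `supp w = I`, then
`k(α, w) ≥ α_{I,+}` for all `α ∈ Φ⁺`. -/
theorem k_ge_aPlus (Φ Pos I : Set V) (hΦ : IsRootSystem Φ)
    (hirr : IsIrreducibleRootSystem Φ) (hPos : IsPositiveSystem Φ Pos)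
    (θ : V) (hθ : θ ∈ Pos ∧ ∀ α ∈ Φ, RootLE Pos α θ)
    (hI : IsUpperIdeal Pos I)
    (w : V ≃ᵃ[ℝ] V) (hw : w ∈ affineWeylGroup Φ)
    (kk : V → ℤ) (hkk : IsAlcoveK Pos θ w kk)
    (hsupp : ∀ α ∈ Pos, 0 ≤ kk α ∧ (α ∈ I ↔ 1 ≤ kk α)) :
    ∀ α ∈ Pos, (aPlus I α : ℤ) ≤ kk α := by
  classical
  -- A point in the fundamental alcove, via a Riesz representative of the functional.
  obtain ⟨f, hf0, hfPos⟩ := hPos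
  have hfc : Continuous f := f.continuous_of_finiteDimensional
  set F : V →L[ℝ] ℝ := LinearMap.toContinuousLinearMap f with hF
  set u : V := (InnerProductSpace.toDual ℝ V).symm F with hu
  have hinner : ∀ x : V, ⟪u, x⟫ = f x := by
    intro x
    have := InnerProductSpace.toDual_symm_apply (E := V) (𝕜 := ℝ) (x := x) (y := F)
    rw [hu]; exact this
  have hposu : ∀ α ∈ Pos, 0 < ⟪α, u⟫ := by
    intro α hα
    rw [real_inner_comm, hinner]
    rw [hfPos] at hα
    exact hα.2
  set ε : ℝ := (|⟪u, θ⟫| + 1)⁻¹ / 2 with hε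
  have hεpos : 0 < ε := by positivity
  have hvA : ε • u ∈ fundamentalAlcove Pos θ := by
    constructor
    · intro α hα
      have := hposu α hα.1
      rw [real_inner_smul_right]
      positivity
    · have h1 : ⟪θ, ε • u⟫ = ε * ⟪u, θ⟫ := by
        rw [real_inner_smul_right, real_inner_comm]
      rw [h1]
      have hle : ⟪u, θ⟫ ≤ |⟪u, θ⟫| := le_abs_self _
      have habs : (0:ℝ) < |⟪u, θ⟫| + 1 := by positivity
      calc ε * ⟪u, θ⟫ ≤ ε * (|⟪u, θ⟫| + 1) := by nlinarith
        _ = 1 / 2 := by rw [hε, div_mul_eq_mul_div, inv_mul_cancel₀ habs.ne']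
        _ < 1 := by norm_num
  set v : V := ε • u
  -- Main estimate: any k with IsSumOf I k α satisfies k ≤ kk α.
  intro α hα
  have key : ∀ k : ℕ, IsSumOf I k α → (k : ℤ) ≤ kk α := by
    rintro k ⟨g, hg, hsum⟩
    have hgk : ∀ i, (1 : ℝ) < ⟪g i, w v⟫ := by
      intro i
      have hgP : g i ∈ Pos := hI.1 (hg i)
      have h1 : (1:ℤ) ≤ kk (g i) := ((hsupp _ hgP).2).1 (hg i)
      have := (hkk _ hgP v hvA).1
      have : (kk (g i) : ℝ) < ⟪g i, w v⟫ := this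
      have h1' : (1:ℝ) ≤ (kk (g i) : ℝ) := by exact_mod_cast h1
      linarith
    have hsum' : (k : ℝ) ≤ ⟪α, w v⟫ := by
      have : ⟪α, w v⟫ = ∑ i, ⟪g i, w v⟫ := by
        rw [← hsum, sum_inner]
      rw [this]
      calc (k : ℝ) = ∑ _i : Fin k, (1:ℝ) := by simp
        _ ≤ ∑ i, ⟪g i, w v⟫ := Finset.sum_le_sum fun i _ => (hgk i).le
    have hup : ⟪α, w v⟫ < kk α + 1 := (hkk α hα v hvA).2
    have : (k : ℝ) < kk α + 1 := lt_of_le_of_lt hsum' hup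
    have : (k : ℤ) < kk α + 1 := by exact_mod_cast this
    omega
  -- Conclude via sSup.
  have h0 : 0 ≤ kk α := (hsupp α hα).1
  have hbdd : aPlus I α ≤ (kk α).toNat := by
    apply csSup_le'
    intro k hk
    have := key k hk
    omega
  calc (aPlus I α : ℤ) ≤ ((kk α).toNat : ℤ) := by exact_mod_cast hbdd
    _ = kk α := Int.toNat_of_nonneg h0
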